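/- Let R be a commutative ring and consider the free noncommutative power series algebra R⟨⟨e₀,e₁⟩⟩ with the shuffle coproduct Δ_sh determined by Δ_sh(e₀) = e₀⊗1 + 1⊗e₀ and Δ_sh(e₁) = e₁⊗1 + 1⊗e₁ on the completed tensor product. Then an element u of R⟨⟨e₀,e₁⟩⟩ ⊗̂ R⟨⟨e₀,e₁⟩⟩ commutes with Δ_sh(e₁) = e₁⊗1 + 1⊗e₁ if and only if u belongs to R⟨⟨e₁⟩⟩ ⊗̂ R⟨⟨e₁⟩⟩, i.e. the coefficient u[w⊗w'] vanishes whenever at least one of the words w, w' contains the letter e₀. -/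

import Mathlib

/-- Core lemma (forward direction): if `u` satisfies the commutation relation,
then `u a b = 0` whenever `a` contains the letter `false` (= e₀).
Proof by double strong induction: outer on the length of `b`, inner on the
number of trailing `true`s of `a` (measured by `indexOf false a.reverse`),
using the "rotation" `u (c ++ [true]) b = u (true :: c) b`. -/
private lemma stmt_5_aux {R : Type*} [CommRing R] (u : List Bool → List Bool → R)
    (h : ∀ w w' : List Bool,
      ((if w.head? = some true then u w.tail w' else 0) +
        (if w'.head? = some true then u w w'.tail else 0)) =
      ((if w.getLast? = some true then u w.dropLast w' else 0) +
        (if w'.getLast? = some true then u w w'.dropLast else 0))) :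
    ∀ (n k : ℕ) (b a : List Bool), b.length ≤ n → false ∈ a →
      List.idxOf false a.reverse ≤ k → u a b = 0 := by
  intro n
  induction n using Nat.strong_induction_on with
  | _ n ihn =>
  intro k
  induction k using Nat.strong_induction_on with
  | _ k ihk =>
  intro b a hb ha hk
  have hane : a ≠ [] := by rintro rfl; simp at ha
  -- the relation instance at (true :: a, b)
  have H := h (true :: a) b
  rw [List.head?_cons, if_pos rfl, List.tail_cons] at H
  -- the two "error" terms (with shorter second coordinate) vanish by the outer IH
  have hz : ∀ b' : List Bool, b'.length < n → u (true :: a) b' = 0 := by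
    intro b' hb'
    exact ihn _ hb' (List.idxOf false (true :: a).reverse) b' (true :: a) le_rfl
      (List.mem_cons_of_mem _ ha) le_rfl
  have e1 : (if b.head? = some true then u (true :: a) b.tail else 0) = 0 := by
    split
    · next hbh =>
      have hbne : b ≠ [] := by rintro rfl; simp at hbh
      have h1 : 0 < b.length := List.length_pos_iff.mpr hbne
      have h2 : b.tail.length = b.length - 1 := List.length_tail
      exact hz _ (by omega)
    · rfl
  have e2 : (if b.getLast? = some true then u (true :: a) b.dropLast else 0) = 0 := by
    split
    · next hbh =>
      have hbne : b ≠ [] := by rintro rfl; simp at hbh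
      have h1 : 0 < b.length := List.length_pos_iff.mpr hbne
      have h2 : b.dropLast.length = b.length - 1 := List.length_dropLast
      exact hz _ (by omega)
    · rfl
  simp only [e1, e2, add_zero] at H
  -- split according to the last letter of `a`
  rcases List.eq_nil_or_concat a with rfl | ⟨c, x, rfl⟩
  · exact absurd rfl hane
  rw [List.concat_eq_append] at *
  cases x with
  | false =>
    -- `a` ends with `false`: the remaining right-hand term vanishes
    rw [← List.cons_append, List.getLast?_concat] at H
    simpa using H
  | true =>
    -- `a` ends with `true`: rotation step
    have hc : false ∈ c := by
      rcases List.mem_append.mp ha with h' | h'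
      · exact h'
      · simp at h'
    rw [← List.cons_append, List.getLast?_concat, if_pos rfl, List.dropLast_concat] at H
    -- H : u (c ++ [true]) b = u (true :: c) b
    rw [H]
    -- measure decreases
    have hm1 : List.idxOf false (c ++ [true]).reverse =
        List.idxOf false c.reverse + 1 := by
      rw [List.reverse_concat, List.idxOf_cons_ne _ (by decide)]
    have hm2 : List.idxOf false (true :: c).reverse =
        List.idxOf false c.reverse := by
      rw [List.reverse_cons]
      exact List.idxOf_append_of_mem (by simpa using hc)
    have hlt : List.idxOf false c.reverse < k := by
      rw [hm1] at hk; omega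
    exact ihk _ hlt b (true :: c) hb (List.mem_cons_of_mem _ hc) (le_of_eq hm2)

/-- Commutant of Δ_sh(e₁) = e₁⊗1 + 1⊗e₁ in the completed tensor square of
R⟨⟨e₀,e₁⟩⟩. Words on {e₀,e₁} are modelled as lists of booleans
(`false` = e₀, `true` = e₁) and an element of the completed tensor product is
a family of coefficients indexed by pairs of words. Left multiplication by
e₁⊗1 + 1⊗e₁ strips a leading e₁ in one of the factors; right multiplication
strips a trailing e₁. An element commutes with e₁⊗1 + 1⊗e₁ iff it is
supported on pairs of words in the letter e₁ only. -/
theorem stmt_5 (R : Type*) [CommRing R] (u : List Bool → List Bool → R) :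
    (∀ w w' : List Bool,
      ((if w.head? = some true then u w.tail w' else 0) +
        (if w'.head? = some true then u w w'.tail else 0)) =
      ((if w.getLast? = some true then u w.dropLast w' else 0) +
        (if w'.getLast? = some true then u w w'.dropLast else 0)))
    ↔ (∀ w w' : List Bool, (false ∈ w ∨ false ∈ w') → u w w' = 0) := by
  constructor
  · intro h w w' hw
    rcases hw with hw | hw
    · exact stmt_5_aux u h w'.length (List.idxOf false w.reverse) w' w le_rfl hw le_rfl
    · -- apply the core lemma to the swapped family
      have h' : ∀ a b : List Bool,
          ((if a.head? = some true then u b a.tail else 0) +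
            (if b.head? = some true then u b.tail a else 0)) =
          ((if a.getLast? = some true then u b a.dropLast else 0) +
            (if b.getLast? = some true then u b.dropLast a else 0)) := by
        intro a b
        linear_combination h b a
      exact stmt_5_aux (fun a b => u b a) h' w.length (List.idxOf false w'.reverse)
        w w' le_rfl hw le_rfl
  · intro hs w w'
    by_cases hw : false ∈ w
    · have t1 : (if w.head? = some true then u w.tail w' else 0) = 0 := by
        split
        · next hh =>
          cases w with
          | nil => simp at hh
          | cons x t =>
            simp only [List.head?_cons, Option.some.injEq] at hh
            subst hh
            have : false ∈ t := by simpa using hw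
            exact hs _ _ (Or.inl this)
        · rfl
      have t2 : (if w'.head? = some true then u w w'.tail else 0) = 0 := by
        split
        · exact hs _ _ (Or.inl hw)
        · rfl
      have t3 : (if w.getLast? = some true then u w.dropLast w' else 0) = 0 := by
        split
        · next hh =>
          rcases List.eq_nil_or_concat w with rfl | ⟨c, x, rfl⟩
          · simp at hh
          · rw [List.concat_eq_append] at *
            rw [List.getLast?_concat, Option.some.injEq] at hh
            subst hh
            have : false ∈ c := by
              rcases List.mem_append.mp hw with h' | h'
              · exact h'
              · simp at h'
            rw [List.dropLast_concat]
            exact hs _ _ (Or.inl this)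
        · rfl
      have t4 : (if w'.getLast? = some true then u w w'.dropLast else 0) = 0 := by
        split
        · exact hs _ _ (Or.inl hw)
        · rfl
      rw [t1, t2, t3, t4]
    · by_cases hw' : false ∈ w'
      · have t1 : (if w.head? = some true then u w.tail w' else 0) = 0 := by
          split
          · exact hs _ _ (Or.inr hw')
          · rfl
        have t2 : (if w'.head? = some true then u w w'.tail else 0) = 0 := by
          split
          · next hh =>
            cases w' with
            | nil => simp at hh
            | cons x t =>
              simp only [List.head?_cons, Option.some.injEq] at hh
              subst hh
              have : false ∈ t := by simpa using hw'
              exact hs _ _ (Or.inr this)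
          · rfl
        have t3 : (if w.getLast? = some true then u w.dropLast w' else 0) = 0 := by
          split
          · exact hs _ _ (Or.inr hw')
          · rfl
        have t4 : (if w'.getLast? = some true then u w w'.dropLast else 0) = 0 := by
          split
          · next hh =>
            rcases List.eq_nil_or_concat w' with rfl | ⟨c, x, rfl⟩
            · simp at hh
            · rw [List.concat_eq_append] at *
              rw [List.getLast?_concat, Option.some.injEq] at hh
              subst hh
              have : false ∈ c := by
                rcases List.mem_append.mp hw' with h' | h'
                · exact h'
                · simp at h'
              rw [List.dropLast_concat]
              exact hs _ _ (Or.inr this)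
          · rfl
        rw [t1, t2, t3, t4]
      · -- both words consist only of `true`s
        have hw1 : w = List.replicate w.length true := by
          apply List.eq_replicate_of_mem
          intro b hb
          cases b
          · exact absurd hb hw
          · rfl
        have hw2 : w' = List.replicate w'.length true := by
          apply List.eq_replicate_of_mem
          intro b hb
          cases b
          · exact absurd hb hw'
          · rfl
        rw [hw1, hw2]
        rw [List.head?_replicate, List.head?_replicate, List.getLast?_replicate,
          List.getLast?_replicate, List.tail_replicate, List.tail_replicate,
          List.dropLast_replicate, List.dropLast_replicate]
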